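/- Let F be an AL-RNN such that for every p ≥ 1 and every p-tuple of sign patterns (s_1,…,s_p) the ordered product (A + W·D_{s_p})···(A + W·D_{s_1}), viewed as a complex matrix, has no eigenvalue of absolute value 1, and assume that every periodic point of F has all of its last P coordinates nonzero. Let z_n = F^n(z_0) be a bounded orbit with all z_n ∈ ⋃_s U_s and symbolic sequence a_n. Then the orbit is asymptotically aperiodic (i.e., there is no periodic orbit Γ of F with dist(z_n, Γ) → 0) if and only if the symbolic sequence (a_n) is aperiodic, i.e., there exist no p ≥ 1 and N with a_{n+p} = a_n for all n ≥ N. -/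

import Mathlib

open Matrix Filter Topology

/-- `Φ*`: identity on the first `M − P` coordinates, ReLU on the last `P` coordinates. -/
noncomputable def phiStar (M P : ℕ) (z : Fin M → ℝ) : Fin M → ℝ :=
  fun j => if (j : ℕ) < M - P then z j else max 0 (z j)

/-- The AL-RNN map `F(z) = A z + W Φ*(z) + h`. -/
noncomputable def alrnn (M P : ℕ) (A W : Matrix (Fin M) (Fin M) ℝ) (h : Fin M → ℝ)
    (z : Fin M → ℝ) : Fin M → ℝ :=
  A.mulVec z + W.mulVec (phiStar M P z) + h

/-- The diagonal matrix `D_s` attached to a sign pattern `s : Fin P → Fin 2`: its first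
`M − P` diagonal entries are `1` and the `(M − P + i)`-th diagonal entry is `s i`. -/
noncomputable def signDiag (M P : ℕ) (s : Fin P → Fin 2) : Matrix (Fin M) (Fin M) ℝ :=
  Matrix.diagonal fun j =>
    if (j : ℕ) < M - P then 1
    else if hj : (j : ℕ) - (M - P) < P then ((s ⟨(j : ℕ) - (M - P), hj⟩ : ℕ) : ℝ) else 0

/-- The open linear subregion `U_s`: the `(M − P + i)`-th coordinate is `> 0` if
`s i = 1` and `< 0` if `s i = 0`. -/
def regionOpen (M P : ℕ) (hPM : P ≤ M) (s : Fin P → Fin 2) : Set (Fin M → ℝ) :=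
  { z | ∀ i : Fin P,
      if s i = 1 then 0 < z ⟨M - P + (i : ℕ), by omega⟩
      else z ⟨M - P + (i : ℕ), by omega⟩ < 0 }

/-- The closed linear subregion: the sign conditions of `s` hold non-strictly. -/
def regionClosed (M P : ℕ) (hPM : P ≤ M) (s : Fin P → Fin 2) : Set (Fin M → ℝ) :=
  { z | ∀ i : Fin P,
      if s i = 1 then 0 ≤ z ⟨M - P + (i : ℕ), by omega⟩
      else z ⟨M - P + (i : ℕ), by omega⟩ ≤ 0 }

section AuxCore
open Polynomial

lemma opBound {m : ℕ} (B : Matrix (Fin m) (Fin m) ℂ) :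
    ∃ C : ℝ, 0 ≤ C ∧ ∀ x : Fin m → ℂ, ‖B.mulVec x‖ ≤ C * ‖x‖ := by
  let f : (Fin m → ℂ) →L[ℂ] (Fin m → ℂ) := LinearMap.toContinuousLinearMap B.mulVecLin
  exact ⟨‖f‖, norm_nonneg f, fun x => f.le_opNorm x⟩

lemma lemS {V : Type*} [NormedAddCommGroup V] [NormedSpace ℂ V] {μ : ℂ} (hμ : ‖μ‖ < 1)
    {v w : ℕ → V} (hrec : ∀ n, v (n + 1) = μ • v n + w n) (hw : Tendsto w atTop (𝓝 0)) :
    Tendsto v atTop (𝓝 0) := by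
  rw [NormedAddCommGroup.tendsto_nhds_zero] at hw ⊢
  intro ε hε
  have hr0 : (0:ℝ) ≤ ‖μ‖ := norm_nonneg μ
  have hc : 0 < ε * (1 - ‖μ‖) / 2 := by nlinarith
  obtain ⟨N, hN⟩ := (hw _ hc).exists_forall_of_atTop
  have key : ∀ k, ‖v (N + k)‖ ≤ ‖μ‖ ^ k * ‖v N‖ + ε / 2 := by
    intro k
    induction k with
    | zero => simp; nlinarith [norm_nonneg (v N)]
    | succ k ih =>
      have h1 : v (N + (k + 1)) = μ • v (N + k) + w (N + k) := by
        rw [show N + (k + 1) = (N + k) + 1 by ring]; exact hrec _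
      have h2 : ‖v (N + (k+1))‖ ≤ ‖μ‖ * ‖v (N + k)‖ + ‖w (N + k)‖ := by
        rw [h1]
        calc ‖μ • v (N + k) + w (N + k)‖ ≤ ‖μ • v (N + k)‖ + ‖w (N + k)‖ := norm_add_le _ _
        _ = ‖μ‖ * ‖v (N + k)‖ + ‖w (N + k)‖ := by rw [norm_smul]
      have h3 : ‖w (N + k)‖ ≤ ε * (1 - ‖μ‖) / 2 := (hN _ (by omega)).le
      calc ‖v (N + (k+1))‖ ≤ ‖μ‖ * (‖μ‖ ^ k * ‖v N‖ + ε / 2) + ε * (1 - ‖μ‖) / 2 := by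
            refine h2.trans (add_le_add (mul_le_mul_of_nonneg_left ih hr0) h3)
      _ ≤ ‖μ‖ ^ (k+1) * ‖v N‖ + ε / 2 := by rw [pow_succ]; nlinarith
  have hpow : Tendsto (fun k => ‖μ‖ ^ k * ‖v N‖) atTop (𝓝 0) := by
    simpa using (tendsto_pow_atTop_nhds_zero_of_lt_one hr0 hμ).mul_const ‖v N‖
  obtain ⟨K, hK⟩ := (hpow.eventually_lt_const (half_pos hε)).exists_forall_of_atTop
  refine eventually_atTop.mpr ⟨N + K, fun n hn => ?_⟩
  have hnN : n = N + (n - N) := by omega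
  calc ‖v n‖ = ‖v (N + (n - N))‖ := by rw [← hnN]
  _ ≤ ‖μ‖ ^ (n - N) * ‖v N‖ + ε / 2 := key _
  _ < ε / 2 + ε / 2 := by have := hK (n - N) (by omega); linarith
  _ = ε := by ring

lemma aeval_linfac {m : ℕ} (L : Matrix (Fin m) (Fin m) ℂ) (μ : ℂ) (x : Fin m → ℂ) :
    (Polynomial.aeval L (X - C μ)).mulVec x = L.mulVec x - μ • x := by
  rw [map_sub, aeval_X, aeval_C, Matrix.sub_mulVec, Algebra.algebraMap_eq_smul_one,
    Matrix.smul_mulVec, Matrix.one_mulVec]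

lemma claimA {m : ℕ} (L : Matrix (Fin m) (Fin m) ℂ) :
    ∀ R : Multiset ℂ, (∀ μ ∈ R, ‖μ‖ < 1) →
    ∀ v : ℕ → Fin m → ℂ, (∀ n, v (n + 1) = L.mulVec (v n)) →
    (Polynomial.aeval L (R.map fun μ => X - C μ).prod).mulVec (v 0) = 0 →
    Tendsto v atTop (𝓝 0) := by
  intro R
  induction R using Multiset.induction_on with
  | empty =>
    intro _ v hv h0
    simp only [Multiset.map_zero, Multiset.prod_zero, _root_.map_one, Matrix.one_mulVec] at h0
    have : ∀ n, v n = 0 := by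
      intro n; induction n with
      | zero => exact h0
      | succ n ih => rw [hv, ih, Matrix.mulVec_zero]
    simpa [funext this] using tendsto_const_nhds
  | cons μ R ih =>
    intro hR v hv h0
    have hμ : ‖μ‖ < 1 := hR μ (Multiset.mem_cons_self _ _)
    set w : ℕ → Fin m → ℂ := fun n => v (n + 1) - μ • v n with hwdef
    have hwrec : ∀ n, w (n + 1) = L.mulVec (w n) := by
      intro n
      simp only [hwdef, hv, Matrix.mulVec_sub, Matrix.mulVec_smul]
    have hw0 : (Polynomial.aeval L (R.map fun ν => X - C ν).prod).mulVec (w 0) = 0 := by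
      have : w 0 = (Polynomial.aeval L (X - C μ)).mulVec (v 0) := by
        rw [aeval_linfac, hwdef]; simp [hv 0]
      simp only [Multiset.map_cons, Multiset.prod_cons, _root_.map_mul] at h0
      rw [this, Matrix.mulVec_mulVec, ← _root_.map_mul,
        mul_comm ((Multiset.map (fun ν => X - C ν) R).prod) (X - C μ), _root_.map_mul]
      exact h0
    have hwt := ih (fun ν hν => hR ν (Multiset.mem_cons_of_mem hν)) w hwrec hw0
    exact lemS hμ (fun n => by simp [hwdef]) hwt

lemma claimB {m : ℕ} (L : Matrix (Fin m) (Fin m) ℂ) :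
    ∀ R : Multiset ℂ, (∀ μ ∈ R, 1 < ‖μ‖) →
    ∀ v : ℕ → Fin m → ℂ, (∀ n, v (n + 1) = L.mulVec (v n)) →
    ∀ C₀ : ℝ, (∀ n, ‖v n‖ ≤ C₀) →
    (Polynomial.aeval L (R.map fun μ => X - C μ).prod).mulVec (v 0) = 0 →
    v 0 = 0 := by
  intro R
  induction R using Multiset.induction_on with
  | empty =>
    intro _ v _ _ _ h0
    simpa using h0
  | cons μ R ih =>
    intro hR v hv C₀ hC h0
    have hμ : 1 < ‖μ‖ := hR μ (Multiset.mem_cons_self _ _)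
    set w : ℕ → Fin m → ℂ := fun n => v (n + 1) - μ • v n with hwdef
    have hwrec : ∀ n, w (n + 1) = L.mulVec (w n) := by
      intro n
      simp only [hwdef, hv, Matrix.mulVec_sub, Matrix.mulVec_smul]
    have hwbdd : ∀ n, ‖w n‖ ≤ C₀ + ‖μ‖ * C₀ := by
      intro n
      calc ‖v (n+1) - μ • v n‖ ≤ ‖v (n+1)‖ + ‖μ • v n‖ := norm_sub_le _ _
      _ = ‖v (n+1)‖ + ‖μ‖ * ‖v n‖ := by rw [norm_smul]
      _ ≤ C₀ + ‖μ‖ * C₀ := add_le_add (hC _) (mul_le_mul_of_nonneg_left (hC _) (by positivity))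
    have hw0 : (Polynomial.aeval L (R.map fun ν => X - C ν).prod).mulVec (w 0) = 0 := by
      have : w 0 = (Polynomial.aeval L (X - C μ)).mulVec (v 0) := by
        rw [aeval_linfac, hwdef]; simp [hv 0]
      simp only [Multiset.map_cons, Multiset.prod_cons, _root_.map_mul] at h0
      rw [this, Matrix.mulVec_mulVec, ← _root_.map_mul,
        mul_comm ((Multiset.map (fun ν => X - C ν) R).prod) (X - C μ), _root_.map_mul]
      exact h0
    have hw0' : w 0 = 0 :=
      ih (fun ν hν => hR ν (Multiset.mem_cons_of_mem hν)) w hwrec _ hwbdd hw0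
    have hwall : ∀ n, w n = 0 := by
      intro n; induction n with
      | zero => exact hw0'
      | succ n ihn => rw [hwrec, ihn, Matrix.mulVec_zero]
    have hgeo : ∀ n, v n = μ ^ n • v 0 := by
      intro n; induction n with
      | zero => simp
      | succ n ihn =>
        have : v (n+1) = μ • v n := by
          have := hwall n
          simp only [hwdef, sub_eq_zero] at this
          exact this
        rw [this, ihn, smul_smul, ← pow_succ']
    by_contra hne
    have hv0 : 0 < ‖v 0‖ := norm_pos_iff.mpr hne
    have htop : Tendsto (fun n => ‖μ‖ ^ n * ‖v 0‖) atTop atTop :=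
      (tendsto_pow_atTop_atTop_of_one_lt hμ).atTop_mul_const hv0
    obtain ⟨n, hn⟩ := (htop.eventually_gt_atTop C₀).exists
    have : ‖v n‖ = ‖μ‖ ^ n * ‖v 0‖ := by rw [hgeo n, norm_smul, norm_pow]
    have := hC n
    linarith [hn, this]

lemma charpoly_eval_eq {m : ℕ} (L : Matrix (Fin m) (Fin m) ℂ) (μ : ℂ) :
    L.charpoly.eval μ = (algebraMap ℂ (Matrix (Fin m) (Fin m) ℂ) μ - L).det := by
  rw [Matrix.charpoly, _root_.eval_det, Matrix.matPolyEquiv_charmatrix, eval_sub, eval_X, eval_C]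
  rfl

lemma mem_spectrum_iff_root {m : ℕ} (L : Matrix (Fin m) (Fin m) ℂ) (μ : ℂ) :
    μ ∈ spectrum ℂ L ↔ L.charpoly.IsRoot μ := by
  rw [spectrum.mem_iff, Matrix.isUnit_iff_isUnit_det, isUnit_iff_ne_zero, not_ne_iff,
    Polynomial.IsRoot, charpoly_eval_eq]

lemma hypTendsto {m : ℕ} (L : Matrix (Fin m) (Fin m) ℂ)
    (hspec : ∀ μ ∈ spectrum ℂ L, ‖μ‖ ≠ 1)
    (v : ℕ → Fin m → ℂ) (hv : ∀ n, v (n + 1) = L.mulVec (v n))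
    (C₀ : ℝ) (hC : ∀ n, ‖v n‖ ≤ C₀) :
    Tendsto v atTop (𝓝 0) := by
  classical
  set χ := L.charpoly with hχ
  have hmonic : χ.Monic := Matrix.charpoly_monic L
  have hsplit : χ = (χ.roots.map fun μ => X - C μ).prod :=
    (IsAlgClosed.splits χ).eq_prod_roots_of_monic hmonic
  set Rs := χ.roots.filter (fun μ => ‖μ‖ < 1) with hRs
  set Ru := χ.roots.filter (fun μ => ¬ ‖μ‖ < 1) with hRu
  have hadd : Rs + Ru = χ.roots := Multiset.filter_add_not _ _
  set qs := (Rs.map fun μ => X - C μ).prod with hqs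
  set qu := (Ru.map fun μ => X - C μ).prod with hqu
  have hfac : χ = qs * qu := by
    conv_lhs => rw [hsplit]
    rw [← hadd, Multiset.map_add, Multiset.prod_add]
  have hroot_spec : ∀ μ ∈ χ.roots, μ ∈ spectrum ℂ L := by
    intro μ hμ
    rw [mem_spectrum_iff_root]
    exact isRoot_of_mem_roots hμ
  have hRs_lt : ∀ μ ∈ Rs, ‖μ‖ < 1 := fun μ hμ => (Multiset.mem_filter.mp hμ).2
  have hRu_gt : ∀ μ ∈ Ru, 1 < ‖μ‖ := by
    intro μ hμ
    obtain ⟨hμr, hμn⟩ := Multiset.mem_filter.mp hμ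
    have := hspec μ (hroot_spec μ hμr)
    push_neg at hμn
    exact lt_of_le_of_ne hμn (Ne.symm this)
  have hcomm : ∀ q : ℂ[X], (Polynomial.aeval L q) * L = L * (Polynomial.aeval L q) := by
    intro q
    calc Polynomial.aeval L q * L = Polynomial.aeval L (q * X) := by
          rw [_root_.map_mul, aeval_X]
    _ = Polynomial.aeval L (X * q) := by rw [mul_comm]
    _ = L * Polynomial.aeval L q := by rw [_root_.map_mul, aeval_X]
  set v' : ℕ → Fin m → ℂ := fun n => (Polynomial.aeval L qs).mulVec (v n) with hv'
  have hv'rec : ∀ n, v' (n + 1) = L.mulVec (v' n) := by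
    intro n
    simp only [hv', hv, Matrix.mulVec_mulVec, hcomm]
  obtain ⟨Cop, hCop0, hCop⟩ := opBound (Polynomial.aeval L qs)
  have hC₀0 : 0 ≤ C₀ := le_trans (norm_nonneg (v 0)) (hC 0)
  have hv'bdd : ∀ n, ‖v' n‖ ≤ Cop * C₀ := fun n =>
    le_trans (hCop (v n)) (mul_le_mul_of_nonneg_left (hC n) hCop0)
  have hv'0 : v' 0 = 0 := by
    refine claimB L Ru hRu_gt v' hv'rec _ hv'bdd ?_
    show (Polynomial.aeval L qu).mulVec ((Polynomial.aeval L qs).mulVec (v 0)) = 0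
    rw [Matrix.mulVec_mulVec, ← _root_.map_mul, mul_comm qu qs, ← hfac,
      Matrix.aeval_self_charpoly, Matrix.zero_mulVec]
  exact claimA L Rs hRs_lt v hv hv'0
lemma realTendsto {m : ℕ} (Lr : Matrix (Fin m) (Fin m) ℝ)
    (hspec : ∀ μ ∈ spectrum ℂ (Lr.map Complex.ofReal), ‖μ‖ ≠ 1)
    (u : ℕ → Fin m → ℝ) (hu : ∀ n, u (n + 1) = Lr.mulVec (u n))
    (C₀ : ℝ) (hC : ∀ n, ‖u n‖ ≤ C₀) :
    Tendsto u atTop (𝓝 0) := by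
  set v : ℕ → Fin m → ℂ := fun n j => ((u n j : ℝ) : ℂ) with hv
  have hvrec : ∀ n, v (n + 1) = (Lr.map Complex.ofReal).mulVec (v n) := by
    intro n
    funext j
    have : u (n + 1) j = (Lr.mulVec (u n)) j := by rw [hu]
    simp only [hv, this, Matrix.mulVec, dotProduct, Matrix.map_apply]
    push_cast
    rfl
  have hC₀0 : 0 ≤ C₀ := le_trans (norm_nonneg (u 0)) (hC 0)
  have hvbdd : ∀ n, ‖v n‖ ≤ C₀ := by
    intro n
    rw [pi_norm_le_iff_of_nonneg hC₀0]
    intro j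
    have : ‖v n j‖ = ‖u n j‖ := Complex.norm_real _
    rw [this]
    exact le_trans (norm_le_pi_norm (u n) j) (hC n)
  have hvt := hypTendsto (Lr.map Complex.ofReal)
    (fun μ hμ => by simpa using hspec μ hμ) v hvrec C₀ hvbdd
  rw [tendsto_pi_nhds] at hvt ⊢
  intro j
  have := (Complex.continuous_re.tendsto 0).comp (hvt j)
  simpa [Function.comp_def, hv] using this
lemma regionOpen_subset (M P : ℕ) (hPM : P ≤ M) (s : Fin P → Fin 2) :
    regionOpen M P hPM s ⊆ regionClosed M P hPM s := by
  intro z hz i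
  have := hz i
  split_ifs with hs <;> simp only [hs, if_true, if_false, eq_self_iff_true] at this ⊢ <;>
    first
      | exact this.le
      | · simp only [if_neg hs] at this; exact this.le
      | · simpa using this.le

lemma alrnn_affine (M P : ℕ) (hPM : P ≤ M) (A W : Matrix (Fin M) (Fin M) ℝ) (h : Fin M → ℝ)
    (s : Fin P → Fin 2) (z : Fin M → ℝ) (hz : z ∈ regionClosed M P hPM s) :
    alrnn M P A W h z = (A + W * signDiag M P s).mulVec z + h := by
  have key : phiStar M P z = (signDiag M P s).mulVec z := by
    funext j
    rw [signDiag, Matrix.mulVec_diagonal, phiStar]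
    by_cases hj : (j : ℕ) < M - P
    · simp [hj]
    · have hj2 : (j : ℕ) - (M - P) < P := by omega
      have hidx : (⟨M - P + ((j : ℕ) - (M - P)), by omega⟩ : Fin M) = j := by
        apply Fin.ext; simp; omega
      have hzi := hz ⟨(j : ℕ) - (M - P), hj2⟩
      rw [hidx] at hzi
      set i : Fin P := ⟨(j : ℕ) - (M - P), hj2⟩
      have h2 : s i = 0 ∨ s i = 1 := by omega
      rcases h2 with h2 | h2
      · rw [if_neg (by simp [h2]) ] at hzi
        simp [hj, hj2, h2, max_eq_left hzi]; exact Or.inl h2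
      · rw [if_pos h2] at hzi
        simp [hj, hj2, h2, max_eq_right hzi]; simp [show s ⟨(j : ℕ) - (M - P), hj2⟩ = 1 from h2]
  rw [alrnn, key, Matrix.add_mulVec, ← Matrix.mulVec_mulVec]

lemma continuous_alrnn (M P : ℕ) (A W : Matrix (Fin M) (Fin M) ℝ) (h : Fin M → ℝ) :
    Continuous (alrnn M P A W h) := by
  have hphi : Continuous (phiStar M P) := by
    apply continuous_pi
    intro j
    unfold phiStar
    split_ifs
    · exact continuous_apply j
    · exact continuous_const.max (continuous_apply j)
  have hmul : ∀ B : Matrix (Fin M) (Fin M) ℝ, Continuous (fun x : Fin M → ℝ => B.mulVec x) := by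
    intro B
    have : Continuous (B.mulVecLin) := LinearMap.continuous_of_finiteDimensional _
    exact this
  unfold alrnn
  exact (((hmul A).add ((hmul W).comp hphi)).add continuous_const)
end AuxCore

lemma dir1 (M P : ℕ) (hM : 1 ≤ M) (hP : 1 ≤ P) (hPM : P ≤ M)
    (A W : Matrix (Fin M) (Fin M) ℝ) (h : Fin M → ℝ)
    (hper : ∀ z : Fin M → ℝ, (∃ p : ℕ, 1 ≤ p ∧ (alrnn M P A W h)^[p] z = z) →
      ∀ i : Fin P, z ⟨M - P + (i : ℕ), by have := hPM; omega⟩ ≠ 0)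
    (z : ℕ → Fin M → ℝ) (horb : ∀ n : ℕ, z (n + 1) = alrnn M P A W h (z n))
    (a : ℕ → Fin P → Fin 2) (ha : ∀ n : ℕ, z n ∈ regionOpen M P hPM (a n)) :
    (∃ p : ℕ, ∃ _hp : 1 ≤ p, ∃ y : Fin p → Fin M → ℝ,
        Function.Injective y ∧
        (∀ k : Fin p, alrnn M P A W h (y k) = y ⟨((k : ℕ) + 1) % p, Nat.mod_lt _ (by have := hP; omega)⟩) ∧
        Tendsto (fun n => Metric.infDist (z n) (Set.range y)) atTop (𝓝 0)) →
      ∃ p : ℕ, 1 ≤ p ∧ ∃ N : ℕ, ∀ n ≥ N, a (n + p) = a n := by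
  rintro ⟨p, hp, y, hyinj, hycyc, hytend⟩
  set F := alrnn M P A W h with hF
  haveI : Nonempty (Fin p) := ⟨⟨0, by omega⟩⟩
  haveI : Nonempty (Fin P) := ⟨⟨0, by omega⟩⟩
  -- iterates along the cycle
  have hstep : ∀ (k : Fin p) (j : ℕ),
      F^[j] (y k) = y ⟨((k : ℕ) + j) % p, Nat.mod_lt _ (by omega)⟩ := by
    intro k j
    induction j with
    | zero => simp [Fin.ext_iff, Nat.mod_eq_of_lt k.isLt]
    | succ j ih =>
      rw [Function.iterate_succ_apply', ih, hycyc]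
      exact congrArg y (Fin.ext (by simp [Nat.mod_add_mod, Nat.add_assoc]))
  have hyper : ∀ k : Fin p, F^[p] (y k) = y k := by
    intro k
    rw [hstep k p]
    exact congrArg y (Fin.ext (by simp [Nat.add_mod_right, Nat.mod_eq_of_lt k.isLt]))
  have hnz : ∀ (k : Fin p) (i : Fin P), y k ⟨M - P + (i : ℕ), by omega⟩ ≠ 0 :=
    fun k i => hper (y k) ⟨p, hp, hyper k⟩ i
  -- the coding of each periodic point
  set spat : Fin p → Fin P → Fin 2 :=
    fun k i => if 0 < y k ⟨M - P + (i : ℕ), by omega⟩ then 1 else 0 with hspat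
  -- minimal coordinate magnitude
  set δ : ℝ := Finset.univ.inf'
      (Finset.univ_nonempty) (fun ki : Fin p × Fin P => |y ki.1 ⟨M - P + (ki.2 : ℕ), by omega⟩|)
    with hδ
  have hδpos : 0 < δ := by
    rw [hδ, Finset.lt_inf'_iff]
    exact fun ki _ => abs_pos.mpr (hnz ki.1 ki.2)
  -- minimal gap
  have hρex : ∃ ρ : ℝ, 0 < ρ ∧ ∀ k k' : Fin p, k ≠ k' → ρ ≤ dist (y k) (y k') := by
    by_cases hp2 : ∃ kk' : Fin p × Fin p, kk'.1 ≠ kk'.2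
    · set s := Finset.univ.filter (fun kk' : Fin p × Fin p => kk'.1 ≠ kk'.2) with hs
      have hsne : s.Nonempty := ⟨hp2.choose, by simp [hs, hp2.choose_spec]⟩
      refine ⟨s.inf' hsne (fun kk' => dist (y kk'.1) (y kk'.2)), ?_, ?_⟩
      · rw [Finset.lt_inf'_iff]
        intro kk' hkk'
        have hne : kk'.1 ≠ kk'.2 := by simpa [hs] using hkk'
        exact dist_pos.mpr (fun he => hne (hyinj he))
      · intro k k' hne
        exact Finset.inf'_le (fun kk' : Fin p × Fin p => dist (y kk'.1) (y kk'.2))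
          (Finset.mem_filter.mpr ⟨Finset.mem_univ ((k, k') : Fin p × Fin p), hne⟩)
    · push_neg at hp2
      exact ⟨1, one_pos, fun k k' hne => absurd (hp2 (k, k')) (by simpa using hne)⟩
  obtain ⟨ρ, hρpos, hρle⟩ := hρex
  set ε₁ : ℝ := min δ ρ / 2 with hε₁
  have hε₁pos : 0 < ε₁ := by
    rw [hε₁]; exact div_pos (lt_min hδpos hρpos) two_pos
  -- continuity modulus at the periodic points
  have hmod : ∀ k : Fin p, ∃ η, 0 < η ∧ ∀ x, dist x (y k) < η → dist (F x) (F (y k)) < ε₁ := by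
    intro k
    have hc := (continuous_alrnn M P A W h).continuousAt (x := y k)
    rw [Metric.continuousAt_iff] at hc
    obtain ⟨η, hη, hη'⟩ := hc ε₁ hε₁pos
    exact ⟨η, hη, fun x hx => hη' hx⟩
  choose η hηpos hη using hmod
  set ε : ℝ := min ε₁ (Finset.univ.inf' Finset.univ_nonempty η) with hε
  have hεpos : 0 < ε := by
    rw [hε]
    refine lt_min hε₁pos ?_
    rw [Finset.lt_inf'_iff]
    exact fun k _ => hηpos k
  have hεε₁ : ε ≤ ε₁ := min_le_left _ _
  have hεη : ∀ k, ε ≤ η k := fun k =>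
    le_trans (min_le_right _ _) (Finset.inf'_le _ (Finset.mem_univ k))
  rw [Metric.tendsto_atTop] at hytend
  obtain ⟨N, hN⟩ := hytend ε hεpos
  -- nearest-index function
  have hchoice : ∀ n : ℕ, ∃ k : Fin p, ∀ k' : Fin p, dist (z n) (y k) ≤ dist (z n) (y k') := by
    intro n
    obtain ⟨k, _, hk⟩ := Finset.exists_min_image Finset.univ (fun k => dist (z n) (y k))
      ⟨⟨0, by omega⟩, Finset.mem_univ _⟩
    exact ⟨k, fun k' => hk k' (Finset.mem_univ _)⟩
  choose κ hκ using hchoice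
  have hκd : ∀ n, N ≤ n → dist (z n) (y (κ n)) < ε := by
    intro n hn
    have h1 := hN n hn
    rw [Real.dist_eq, sub_zero, abs_of_nonneg Metric.infDist_nonneg] at h1
    obtain ⟨w, ⟨k, rfl⟩, hw⟩ :=
      (Metric.infDist_lt_iff ⟨y (κ n), Set.mem_range_self (κ n)⟩).mp h1
    exact lt_of_le_of_lt (hκ n k) hw
  -- the nearest index advances along the cycle
  have hstep2 : ∀ n, N ≤ n → κ (n + 1) = ⟨((κ n : ℕ) + 1) % p, Nat.mod_lt _ (by omega)⟩ := by
    intro n hn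
    have hd := hκd n hn
    have hdist1 : dist (z (n + 1)) (y ⟨((κ n : ℕ) + 1) % p, Nat.mod_lt _ (by omega)⟩) < ε₁ := by
      rw [horb n, ← hycyc (κ n)]
      exact hη (κ n) _ (lt_of_lt_of_le hd (hεη (κ n)))
    by_contra hne
    have h1 : dist (z (n + 1)) (y (κ (n + 1)))
        ≤ dist (z (n + 1)) (y ⟨((κ n : ℕ) + 1) % p, Nat.mod_lt _ (by omega)⟩) := hκ (n + 1) _
    have h2 : ρ ≤ dist (y (κ (n + 1))) (y ⟨((κ n : ℕ) + 1) % p, Nat.mod_lt _ (by omega)⟩) :=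
      hρle _ _ hne
    have h3 := dist_triangle (y (κ (n + 1))) (z (n + 1))
      (y ⟨((κ n : ℕ) + 1) % p, Nat.mod_lt _ (by omega)⟩)
    rw [dist_comm (y (κ (n + 1))) (z (n + 1))] at h3
    have hε₁ρ : 2 * ε₁ ≤ ρ := by
      rw [hε₁]; have := min_le_right δ ρ; linarith
    linarith
  -- the coding matches the coding of the nearest periodic point
  have hcode : ∀ n, N ≤ n → a n = spat (κ n) := by
    intro n hn
    funext i
    have hdδ : dist (z n) (y (κ n)) < δ := by
      have h1 := hκd n hn
      have h2 : ε ≤ δ := le_trans hεε₁ (by rw [hε₁]; have := min_le_left δ ρ; linarith)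
      linarith
    have hco : |z n ⟨M - P + (i : ℕ), by omega⟩ - y (κ n) ⟨M - P + (i : ℕ), by omega⟩|
        ≤ dist (z n) (y (κ n)) := by
      have := dist_le_pi_dist (z n) (y (κ n)) ⟨M - P + (i : ℕ), by omega⟩
      rwa [Real.dist_eq] at this
    have hδle : δ ≤ |y (κ n) ⟨M - P + (i : ℕ), by omega⟩| :=
      Finset.inf'_le _ (Finset.mem_univ ((κ n, i) : Fin p × Fin P))
    have hyy := hnz (κ n) i
    have hai := ha n i
    have habs := abs_le.mp hco
    rcases lt_or_gt_of_ne hyy with hneg | hpos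
    · have hzneg : z n ⟨M - P + (i : ℕ), by omega⟩ < 0 := by
        have : |y (κ n) ⟨M - P + (i : ℕ), by omega⟩| = -(y (κ n) ⟨M - P + (i : ℕ), by omega⟩) :=
          abs_of_neg hneg
        rw [this] at hδle
        linarith [habs.2]
      have ha1 : ¬(a n i = 1) := by
        intro h1
        rw [if_pos h1] at hai
        linarith
      have ha0 : a n i = 0 := by omega
      have hs0 : spat (κ n) i = 0 := by
        rw [hspat]
        simp only [if_neg (not_lt.mpr hneg.le)]
      rw [ha0, hs0]
    · have hzpos : 0 < z n ⟨M - P + (i : ℕ), by omega⟩ := by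
        have : |y (κ n) ⟨M - P + (i : ℕ), by omega⟩| = y (κ n) ⟨M - P + (i : ℕ), by omega⟩ :=
          abs_of_pos hpos
        rw [this] at hδle
        linarith [habs.1]
      have ha1 : a n i = 1 := by
        by_contra h1
        rw [if_neg h1] at hai
        linarith
      have hs1 : spat (κ n) i = 1 := by
        rw [hspat]
        simp only [if_pos hpos]
      rw [ha1, hs1]
  -- conclude eventual periodicity
  refine ⟨p, hp, N, fun n hn => ?_⟩
  have hκiter : ∀ j : ℕ, κ (n + j) = ⟨((κ n : ℕ) + j) % p, Nat.mod_lt _ (by omega)⟩ := by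
    intro j
    induction j with
    | zero => simp [Fin.ext_iff, Nat.mod_eq_of_lt (κ n).isLt]
    | succ j ih =>
      rw [show n + (j + 1) = (n + j) + 1 by ring, hstep2 (n + j) (by omega), ih]
      exact Fin.ext (by simp [Nat.mod_add_mod, Nat.add_assoc])
  have hκp : κ (n + p) = κ n := by
    rw [hκiter p]
    exact Fin.ext (by simp [Nat.add_mod_right, Nat.mod_eq_of_lt (κ n).isLt])
  rw [hcode (n + p) (by omega), hcode n hn, hκp]

lemma dir2 (M P : ℕ) (hM : 1 ≤ M) (hP : 1 ≤ P) (hPM : P ≤ M)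
    (A W : Matrix (Fin M) (Fin M) ℝ) (h : Fin M → ℝ)
    (hhyp : ∀ p : ℕ, 1 ≤ p → ∀ s : Fin p → Fin P → Fin 2,
      ∀ μ ∈ spectrum ℂ
        ((((List.ofFn fun k : Fin p => A + W * signDiag M P (s k)).reverse).prod).map
          Complex.ofReal),
        ‖μ‖ ≠ 1)
    (z : ℕ → Fin M → ℝ) (horb : ∀ n : ℕ, z (n + 1) = alrnn M P A W h (z n))
    (hbdd : Bornology.IsBounded (Set.range z))
    (a : ℕ → Fin P → Fin 2) (ha : ∀ n : ℕ, z n ∈ regionOpen M P hPM (a n)) :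
    (∃ p : ℕ, 1 ≤ p ∧ ∃ N : ℕ, ∀ n ≥ N, a (n + p) = a n) →
    (∃ p : ℕ, ∃ _hp : 1 ≤ p, ∃ y : Fin p → Fin M → ℝ,
        Function.Injective y ∧
        (∀ k : Fin p, alrnn M P A W h (y k) = y ⟨((k : ℕ) + 1) % p, Nat.mod_lt _ (by have := hP; omega)⟩) ∧
        Tendsto (fun n => Metric.infDist (z n) (Set.range y)) atTop (𝓝 0)) := by
  classical
  rintro ⟨p, hp, N, hNper⟩
  set F := alrnn M P A W h with hF
  set B : ℕ → Matrix (Fin M) (Fin M) ℝ := fun j => A + W * signDiag M P (a (N + j)) with hB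
  have haper : ∀ m n, N ≤ n → a (n + m * p) = a n := by
    intro m
    induction m with
    | zero => simp
    | succ m ih =>
      intro n hn
      rw [show n + (m + 1) * p = (n + m * p) + p by ring, hNper _ (by omega), ih n hn]
  have haB : ∀ m j, a (N + (m * p + j)) = a (N + j) := by
    intro m j
    rw [show N + (m * p + j) = (N + j) + m * p by ring]
    exact haper m _ (by omega)
  have horbit : ∀ n, z (n + 1) = (A + W * signDiag M P (a n)).mulVec (z n) + h := by
    intro n
    rw [horb n]
    exact alrnn_affine M P hPM A W h _ _ (regionOpen_subset _ _ _ _ (ha n))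
  set Q : ℕ → Matrix (Fin M) (Fin M) ℝ := fun j => (((List.range j).map B).reverse).prod with hQ
  have hQ0 : Q 0 = 1 := by simp [hQ]
  have hQsucc : ∀ j, Q (j + 1) = B j * Q j := by
    intro j
    simp [hQ, List.range_succ]
  set c : ℕ → (Fin M → ℝ) :=
    fun j => Nat.rec (motive := fun _ => Fin M → ℝ) 0 (fun j cj => (B j).mulVec cj + h) j with hc
  have hc0 : c 0 = 0 := rfl
  have hcsucc : ∀ j, c (j + 1) = (B j).mulVec (c j) + h := fun j => rfl
  have haffil : ∀ m j, z (N + m * p + j) = (Q j).mulVec (z (N + m * p)) + c j := by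
    intro m j
    induction j with
    | zero => simp [hQ0, hc0, Matrix.one_mulVec]
    | succ j ih =>
      have h1 : z (N + m * p + j + 1) = (B j).mulVec (z (N + m * p + j)) + h := by
        have h2 := horbit (N + m * p + j)
        rw [show N + m * p + j = N + (m * p + j) by ring, haB m j] at h2
        rw [show N + m * p + j + 1 = N + (m * p + j) + 1 by ring]
        rw [show N + m * p + j = N + (m * p + j) by ring]
        exact h2
      rw [show N + m * p + (j + 1) = (N + m * p + j) + 1 by ring, h1, ih, hcsucc, hQsucc,
        Matrix.mulVec_add, Matrix.mulVec_mulVec, add_assoc]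
  set Lr := Q p with hLr
  set b := c p with hb
  have hw : ∀ m, z (N + (m + 1) * p) = Lr.mulVec (z (N + m * p)) + b := by
    intro m
    have := haffil m p
    rwa [show N + m * p + p = N + (m + 1) * p by ring] at this
  -- identify Lr with the matrix in the hyperbolicity hypothesis
  have hlist : (List.ofFn fun k : Fin p => A + W * signDiag M P (a (N + (k : ℕ))))
      = (List.range p).map B := by
    apply List.ext_getElem
    · simp
    · intro i h1 h2
      simp [hB]
  have hspecLr : ∀ μ ∈ spectrum ℂ (Lr.map Complex.ofReal), ‖μ‖ ≠ 1 := by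
    have := hhyp p hp (fun k => a (N + (k : ℕ)))
    rwa [hlist] at this
  -- fixed point of the affine period map
  have hdet : IsUnit (1 - Lr).det := by
    have h1 : (1 : ℂ) ∉ spectrum ℂ (Lr.map Complex.ofReal) := by
      intro hmem
      exact hspecLr 1 hmem (by simp)
    rw [spectrum.mem_iff, not_not] at h1
    rw [_root_.map_one] at h1
    have h2 : ((1 : Matrix (Fin M) (Fin M) ℂ) - Lr.map Complex.ofReal)
        = (1 - Lr).map Complex.ofReal := by
      ext i j
      by_cases hij : i = j <;>
        simp [Matrix.map_apply, Matrix.one_apply, Matrix.sub_apply, hij]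
    rw [h2, Matrix.isUnit_iff_isUnit_det] at h1
    have h3 : ((1 - Lr).map Complex.ofReal).det = Complex.ofReal ((1 - Lr).det) := by
      have h3' := RingHom.map_det Complex.ofRealHom (1 - Lr)
      exact h3'.symm
    rw [h3, isUnit_iff_ne_zero] at h1
    rw [isUnit_iff_ne_zero]
    intro h4
    exact h1 (by rw [h4, Complex.ofReal_zero])
  set cfix : Fin M → ℝ := (1 - Lr)⁻¹.mulVec b with hcfix
  have hfixe : cfix - Lr.mulVec cfix = b := by
    have h4 : (1 - Lr) * (1 - Lr)⁻¹ = 1 := Matrix.mul_nonsing_inv _ hdet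
    have : (1 - Lr).mulVec cfix = b := by
      rw [hcfix, Matrix.mulVec_mulVec, h4, Matrix.one_mulVec]
    rwa [Matrix.sub_mulVec, Matrix.one_mulVec] at this
  have hfix : Lr.mulVec cfix + b = cfix := by rw [← hfixe]; abel
  -- convergence of the subsequence
  set u : ℕ → Fin M → ℝ := fun m => z (N + m * p) - cfix with hu
  have hurec : ∀ m, u (m + 1) = Lr.mulVec (u m) := by
    intro m
    rw [hu]
    simp only
    rw [hw m, Matrix.mulVec_sub]
    nth_rewrite 1 [← hfix]
    abel
  obtain ⟨C₀, hC₀⟩ := hbdd.exists_norm_le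
  have hubdd : ∀ m, ‖u m‖ ≤ C₀ + ‖cfix‖ := by
    intro m
    calc ‖z (N + m * p) - cfix‖ ≤ ‖z (N + m * p)‖ + ‖cfix‖ := norm_sub_le _ _
    _ ≤ C₀ + ‖cfix‖ := by
        have := hC₀ (z (N + m * p)) (Set.mem_range_self _)
        linarith
  have hulim : Tendsto u atTop (𝓝 0) := realTendsto Lr hspecLr u hurec _ hubdd
  have hwlim : Tendsto (fun m => z (N + m * p)) atTop (𝓝 cfix) := by
    have h5 : Tendsto (fun m => u m + cfix) atTop (𝓝 (0 + cfix)) := hulim.add_const cfix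
    rw [zero_add] at h5
    refine h5.congr fun m => ?_
    rw [hu]
    simp
  -- iterates of the limit point
  have hzit : ∀ n j, z (n + j) = F^[j] (z n) := by
    intro n j
    induction j with
    | zero => simp
    | succ j ih => rw [show n + (j + 1) = (n + j) + 1 by ring, horb, ih,
        ← Function.iterate_succ_apply' F j (z n)]
  have hFcont : Continuous F := continuous_alrnn M P A W h
  have hFjcont : ∀ j : ℕ, Continuous (F^[j]) := by
    intro j
    induction j with
    | zero => simpa using continuous_id
    | succ j ih => rw [Function.iterate_succ]; exact ih.comp hFcont
  have hjlim : ∀ j, Tendsto (fun m => z (N + m * p + j)) atTop (𝓝 (F^[j] cfix)) := by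
    intro j
    have h6 : (fun m => z (N + m * p + j)) = (fun m => F^[j] (z (N + m * p))) := by
      funext m
      exact hzit (N + m * p) j
    rw [h6]
    exact ((hFjcont j).tendsto cfix).comp hwlim
  -- the limit point's iterates are in the closed regions
  have hreg : ∀ j, F^[j] cfix ∈ regionClosed M P hPM (a (N + j)) := by
    intro j
    intro i
    have hzmem : ∀ m, z (N + m * p + j) ∈ regionOpen M P hPM (a (N + j)) := by
      intro m
      have h11 := ha (N + m * p + j)
      have h12 : a (N + m * p + j) = a (N + j) := by
        rw [show N + m * p + j = N + (m * p + j) by ring, haB m j]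
      rwa [h12] at h11
    have hcoord : Tendsto (fun m => z (N + m * p + j) ⟨M - P + (i : ℕ), by omega⟩) atTop
        (𝓝 (F^[j] cfix ⟨M - P + (i : ℕ), by omega⟩)) :=
      ((continuous_apply _).tendsto _).comp (hjlim j)
    by_cases hs : a (N + j) i = 1
    · rw [if_pos hs]
      refine ge_of_tendsto' hcoord fun m => ?_
      have := hzmem m i
      rw [if_pos hs] at this
      exact this.le
    · rw [if_neg hs]
      refine le_of_tendsto' hcoord fun m => ?_
      have := hzmem m i
      rw [if_neg hs] at this
      exact this.le
  -- the limit point is p-periodic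
  have hFp : ∀ j, F^[j] cfix = (Q j).mulVec cfix + c j := by
    intro j
    induction j with
    | zero => simp [hQ0, hc0, Matrix.one_mulVec]
    | succ j ih =>
      rw [Function.iterate_succ_apply', ih]
      have h7 := alrnn_affine M P hPM A W h (a (N + j)) ((Q j).mulVec cfix + c j)
        (by rw [← ih]; exact hreg j)
      rw [← hF] at h7
      rw [h7, hcsucc, hQsucc, Matrix.mulVec_add, Matrix.mulVec_mulVec, add_assoc]
  have hfixp : F^[p] cfix = cfix := by
    rw [hFp p, ← hLr, ← hb, hfix]
  -- minimal period
  have hexq : ∃ q, 1 ≤ q ∧ F^[q] cfix = cfix := ⟨p, hp, hfixp⟩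
  set q := Nat.find hexq with hqdef
  obtain ⟨hq1, hqfix⟩ := Nat.find_spec hexq
  have hqmin : ∀ k, k < q → ¬(1 ≤ k ∧ F^[k] cfix = cfix) := fun k hk => Nat.find_min hexq hk
  have hqmul : ∀ t, F^[t * q] cfix = cfix := by
    intro t
    induction t with
    | zero => simp
    | succ t ih => rw [show (t + 1) * q = t * q + q by ring, Function.iterate_add_apply,
        hqfix, ih]
  refine ⟨q, hq1, fun k : Fin q => F^[(k : ℕ)] cfix, ?_, ?_, ?_⟩
  · -- injectivity
    have key : ∀ i j : Fin q, (i : ℕ) < (j : ℕ) → F^[(i : ℕ)] cfix ≠ F^[(j : ℕ)] cfix := by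
      intro i j hij heq
      have h8 : F^[q - (j : ℕ) + (j : ℕ)] cfix = cfix := by
        rw [show q - (j : ℕ) + (j : ℕ) = q by omega]
        exact hqfix
      rw [Function.iterate_add_apply, ← heq, ← Function.iterate_add_apply] at h8
      exact hqmin (q - (j : ℕ) + (i : ℕ)) (by omega) ⟨by omega, h8⟩
    intro k k' hkk'
    rcases lt_trichotomy ((k : ℕ)) ((k' : ℕ)) with h9 | h9 | h9
    · exact absurd hkk' (key k k' h9)
    · exact Fin.ext h9
    · exact absurd hkk'.symm (key k' k h9)
  · -- the cycle structure
    intro k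
    show F (F^[(k : ℕ)] cfix) = F^[(((k : ℕ) + 1) % q)] cfix
    by_cases hk : (k : ℕ) + 1 < q
    · rw [Nat.mod_eq_of_lt hk, Function.iterate_succ_apply']
    · have hkq : (k : ℕ) + 1 = q := by have := k.isLt; omega
      have hmod0 : ((k : ℕ) + 1) % q = 0 := by rw [hkq, Nat.mod_self]
      have hfix1 : F^[(k : ℕ) + 1] cfix = cfix := by rw [hkq]; exact hqfix
      rw [hmod0, Function.iterate_zero_apply]
      conv_rhs => rw [← hfix1]
      rw [Function.iterate_succ_apply']
  · -- convergence of infDist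
    have hrange : ∀ j : ℕ, F^[j] cfix ∈ Set.range (fun k : Fin q => F^[(k : ℕ)] cfix) := by
      intro j
      refine ⟨⟨j % q, Nat.mod_lt _ (by omega)⟩, ?_⟩
      show F^[j % q] cfix = F^[j] cfix
      conv_rhs => rw [show j = j % q + j / q * q from (Nat.mod_add_div' j q).symm]
      rw [Function.iterate_add_apply, hqmul]
    rw [← tendsto_add_atTop_iff_nat N]
    have hbound : ∀ n : ℕ,
        Metric.infDist (z (n + N)) (Set.range (fun k : Fin q => F^[(k : ℕ)] cfix))
          ≤ dist (z (n + N)) (F^[n % p] cfix) := fun n =>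
      Metric.infDist_le_dist_of_mem (hrange (n % p))
    have hdlim : Tendsto (fun n => dist (z (n + N)) (F^[n % p] cfix)) atTop (𝓝 0) := by
      rw [Metric.tendsto_atTop]
      intro ε hε
      have hKex : ∀ j : Fin p, ∃ K, ∀ m ≥ K,
          dist (z (N + m * p + (j : ℕ))) (F^[(j : ℕ)] cfix) < ε := by
        intro j
        have := (Metric.tendsto_atTop.mp (hjlim (j : ℕ))) ε hε
        exact this
      choose K hK using hKex
      refine ⟨(Finset.univ.sup K + 1) * p, fun n hn => ?_⟩
      have hppos : 0 < p := hp
      have hj : n % p < p := Nat.mod_lt _ hppos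
      have hm : Finset.univ.sup K + 1 ≤ n / p := by
        rw [Nat.le_div_iff_mul_le hppos]
        exact hn
      have hKle : K ⟨n % p, hj⟩ ≤ Finset.univ.sup K :=
        Finset.le_sup (Finset.mem_univ _)
      have h10 : dist (z (N + (n / p) * p + n % p)) (F^[n % p] cfix) < ε := by
        have := hK ⟨n % p, hj⟩ (n / p) (le_trans hKle (by omega))
        exact this
      rw [Real.dist_eq, sub_zero, abs_of_nonneg dist_nonneg]
      rw [show n + N = N + (n / p) * p + n % p by
        have hdm := Nat.div_add_mod n p
        rw [Nat.mul_comm] at hdm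
        omega]
      exact h10
    have hnonneg : ∀ n : ℕ, (0 : ℝ) ≤
        Metric.infDist (z (n + N)) (Set.range (fun k : Fin q => F^[(k : ℕ)] cfix)) :=
      fun n => Metric.infDist_nonneg
    exact squeeze_zero hnonneg hbound hdlim

/-- For an AL-RNN all of whose ordered products of subregion matrices
along arbitrary finite itineraries are hyperbolic (no complex eigenvalue of absolute value
1), and all of whose periodic points have nonzero last `P` coordinates, a bounded orbit
staying in the union of the open subregions is asymptotically aperiodic (no periodic
orbit of the AL-RNN attracts it) if and only if its symbolic sequence is aperiodic. -/
theorem stmt5 (M P : ℕ) (hM : 1 ≤ M) (hP : 1 ≤ P) (hPM : P ≤ M)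
    (A W : Matrix (Fin M) (Fin M) ℝ) (hA : A.IsDiag) (h : Fin M → ℝ)
    (hhyp : ∀ p : ℕ, 1 ≤ p → ∀ s : Fin p → Fin P → Fin 2,
      ∀ μ ∈ spectrum ℂ
        ((((List.ofFn fun k : Fin p => A + W * signDiag M P (s k)).reverse).prod).map
          Complex.ofReal),
        ‖μ‖ ≠ 1)
    (hper : ∀ z : Fin M → ℝ, (∃ p : ℕ, 1 ≤ p ∧ (alrnn M P A W h)^[p] z = z) →
      ∀ i : Fin P, z ⟨M - P + (i : ℕ), by omega⟩ ≠ 0)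
    (z : ℕ → Fin M → ℝ) (horb : ∀ n : ℕ, z (n + 1) = alrnn M P A W h (z n))
    (hbdd : Bornology.IsBounded (Set.range z))
    (a : ℕ → Fin P → Fin 2) (ha : ∀ n : ℕ, z n ∈ regionOpen M P hPM (a n)) :
    (¬ ∃ p : ℕ, ∃ _hp : 1 ≤ p, ∃ y : Fin p → Fin M → ℝ,
        Function.Injective y ∧
        (∀ k : Fin p, alrnn M P A W h (y k) = y ⟨((k : ℕ) + 1) % p, Nat.mod_lt _ (by omega)⟩) ∧
        Tendsto (fun n => Metric.infDist (z n) (Set.range y)) atTop (𝓝 0)) ↔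
      (¬ ∃ p : ℕ, 1 ≤ p ∧ ∃ N : ℕ, ∀ n ≥ N, a (n + p) = a n) := by
  
  rw [not_iff_not]
  exact ⟨dir1 M P hM hP hPM A W h hper z horb a ha,
    dir2 M P hM hP hPM A W h hhyp z horb hbdd a ha⟩
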